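/- Let X be a topological space and G a group acting on X by homeomorphisms, with the action properly discontinuous. Let Φ and Θ be subgroups of G and let R ⊆ X be a subset. Suppose there exist a compact set K' ⊆ X and an injective sequence (φ_k)_{k∈ℕ} of elements of Φ such that (φ_k · K') ∩ R ≠ ∅ for every k, and suppose there exists a compact set K'' ⊆ X such that R ⊆ ⋃_{θ∈Θ} θ · K''. Then there exist a compact set K ⊆ X and an injective sequence (ψ_m)_{m∈ℕ} of elements of the intersection Φ ∩ Θ such that (ψ_m · K) ∩ R ≠ ∅ for every m. -/

import Mathlib

open scoped Pointwise

/-- **Abstract core of Proposition 2.1.**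
If a group `G` acts properly discontinuously by homeomorphisms on a topological space `X`,
`Φ` and `Θ` are subgroups of `G`, and `R ⊆ X` is a set meeting infinitely many `Φ`-translates
of a compact set `K'` and covered by the `Θ`-translates of a compact set `K''`, then `R` meets
infinitely many `(Φ ∩ Θ)`-translates of some compact set. -/
theorem conical_of_conical_and_uniform
    {G X : Type*} [Group G] [TopologicalSpace X] [MulAction G X]
    [ContinuousConstSMul G X]
    (hPD : ∀ K L : Set X, IsCompact K → IsCompact L →
      {g : G | ((g • K) ∩ L).Nonempty}.Finite)
    (Φ Θ : Subgroup G) (R : Set X)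
    (K' : Set X) (hK' : IsCompact K')
    (φ : ℕ → G) (hφinj : Function.Injective φ) (hφmem : ∀ k, φ k ∈ Φ)
    (hφint : ∀ k, ((φ k • K') ∩ R).Nonempty)
    (K'' : Set X) (hK'' : IsCompact K'')
    (hcover : R ⊆ ⋃ θ ∈ Θ, θ • K'') :
    ∃ K : Set X, IsCompact K ∧ ∃ ψ : ℕ → G, Function.Injective ψ ∧
      (∀ m, ψ m ∈ Φ ⊓ Θ) ∧ ∀ m, ((ψ m • K) ∩ R).Nonempty := by
  -- choose points x k in (φ k • K') ∩ R
  choose x hx using hφint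
  -- choose θ k ∈ Θ with x k ∈ θ k • K''
  have hθ : ∀ k, ∃ θ ∈ Θ, x k ∈ θ • K'' := by
    intro k
    have := hcover (hx k).2
    simpa using this
  choose θ hθmem hθx using hθ
  -- the finite set from proper discontinuity
  set F : Set G := {g : G | ((g • K'') ∩ K').Nonempty} with hF
  have hFfin : F.Finite := hPD K'' K' hK'' hK'
  -- f k := (φ k)⁻¹ * θ k lands in F
  set f : ℕ → G := fun k => (φ k)⁻¹ * θ k with hfdef
  have hfF : ∀ k, f k ∈ F := by
    intro k
    refine ⟨(φ k)⁻¹ • x k, ?_, ?_⟩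
    · have := hθx k
      rw [mul_smul]
      exact Set.smul_mem_smul_set this
    · have := (hx k).1
      obtain ⟨y, hy, hyx⟩ := this
      rwa [← hyx, inv_smul_smul]
  -- pigeonhole: some fiber of f is infinite
  haveI : Finite F := hFfin
  have : ∃ g : F, {k : ℕ | (⟨f k, hfF k⟩ : F) = g}.Infinite := by
    by_contra h
    push_neg at h
    have : (Set.univ : Set ℕ).Finite := by
      have : (Set.univ : Set ℕ) ⊆ ⋃ g : F, {k : ℕ | (⟨f k, hfF k⟩ : F) = g} := by
        intro k _
        exact Set.mem_iUnion.2 ⟨⟨f k, hfF k⟩, rfl⟩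
      exact Set.Finite.subset (Set.finite_iUnion h) this
    exact Set.infinite_univ this
  obtain ⟨g, hg⟩ := this
  have hfib : ∀ k ∈ {k : ℕ | (⟨f k, hfF k⟩ : F) = g}, f k = (g : G) := by
    intro k hk
    exact congrArg Subtype.val hk
  -- enumerate the infinite fiber
  set S := {k : ℕ | (⟨f k, hfF k⟩ : F) = g} with hS
  obtain ⟨e⟩ : Nonempty (ℕ ↪ S) := ⟨hg.natEmbedding _⟩
  set k0 : ℕ := ((e 0 : S) : ℕ) with hk0
  refine ⟨φ k0 • K', hK'.smul (φ k0), fun m => φ ((e m : S) : ℕ) * (φ k0)⁻¹, ?_, ?_, ?_⟩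
  · intro a b hab
    have : φ (e a : S) = φ (e b : S) := by
      exact mul_right_cancel hab
    exact Subtype.val_injective.comp e.injective (hφinj this)
  · intro m
    constructor
    · exact Φ.mul_mem (hφmem _) (Φ.inv_mem (hφmem _))
    · -- φ k = θ k * (f k)⁻¹ for k in S, with f k = g
      have h1 : φ ((e m : S) : ℕ) = θ ((e m : S) : ℕ) * (g : G)⁻¹ := by
        have := hfib _ (e m).2
        rw [hfdef] at this
        simp only at this
        rw [← this]
        group
      have h2 : (φ k0)⁻¹ = (g : G) * (θ k0)⁻¹ := by
        have := hfib _ (e 0).2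
        rw [hfdef] at this
        simp only at this
        rw [← this, hk0]
        group
      simp only
      rw [h1, h2]
      have : θ ((e m : S) : ℕ) * (g : G)⁻¹ * ((g : G) * (θ k0)⁻¹) = θ ((e m : S) : ℕ) * (θ k0)⁻¹ := by
        group
      rw [this]
      exact Θ.mul_mem (hθmem _) (Θ.inv_mem (hθmem _))
  · intro m
    have : (φ ((e m : S) : ℕ) * (φ k0)⁻¹) • φ k0 • K' = φ ((e m : S) : ℕ) • K' := by
      rw [smul_smul]
      group
    rw [this]
    exact ⟨x _, hx _⟩
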